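/- Let A = KQ/I be an acyclic gentle algebra and C ⊆ mod(A,d) an irreducible component. Then C is regular (its generic module is a direct sum of band modules) if and only if C contains at least one module which is a direct sum of band modules. Moreover, if C contains a regular module M_0, then every module M in the open subset U = {M ∈ C : rank M(a) is maximal on C for all arrows a} is a direct sum of band modules. -/

import Mathlib

/- ------------------------------------------------------------------
  Common framework: quivers, matrix representation varieties with the
  Zariski topology, the base-change group action, (semi-)stability,
  Schur modules, direct sums, moduli spaces as topological GIT
  quotients, semi-invariants, normality via coordinate rings, and the
  tame / Schur-tame / strictly wild conditions.
------------------------------------------------------------------ -/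

namespace ModuliPaper

/-- A finite quiver: vertices `V`, arrows `Ar`, tail `s` and head `t`. -/
structure Quiv where
  V : Type
  Ar : Type
  [fintV : Fintype V]
  [decV : DecidableEq V]
  [fintA : Fintype Ar]
  [decA : DecidableEq Ar]
  s : Ar → V
  t : Ar → V

attribute [instance] Quiv.fintV Quiv.decV Quiv.fintA Quiv.decA

variable (K : Type) [Field K]

/-- Affine space over `K`, carrying the Zariski topology (below). -/
def AffSp (ι : Type) : Type := ι → K

/-- The Zariski topology on affine space: the basic open sets are the
complements of hypersurfaces. -/
noncomputable instance AffSp.topologicalSpace (ι : Type) : TopologicalSpace (AffSp K ι) :=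
  TopologicalSpace.generateFrom
    {U | ∃ p : MvPolynomial ι K, U = {x : AffSp K ι | MvPolynomial.eval x p ≠ 0}}

/-- A point of the representation space of the quiver `Q` with dimension
vector `d`: a matrix for every arrow. -/
structure Rep (Q : Quiv) (d : Q.V → ℕ) where
  mat : ∀ a : Q.Ar, Matrix (Fin (d (Q.t a))) (Fin (d (Q.s a))) K

/-- The coordinates of the representation space. -/
def CoordIdx (Q : Quiv) (d : Q.V → ℕ) : Type :=
  Σ a : Q.Ar, Fin (d (Q.t a)) × Fin (d (Q.s a))

def Rep.coords {Q : Quiv} {d : Q.V → ℕ} (M : Rep K Q d) : AffSp K (CoordIdx Q d) :=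
  fun c => M.mat c.1 c.2.1 c.2.2

/-- The Zariski topology on the representation space. -/
noncomputable instance Rep.topologicalSpace (Q : Quiv) (d : Q.V → ℕ) :
    TopologicalSpace (Rep K Q d) :=
  TopologicalSpace.induced (Rep.coords K) inferInstance

/-- The base change group `GL(d) = ∏ₓ GL(d(x),K)` (as a family of invertible
matrices) acting by simultaneous conjugation. -/
def glAct {Q : Quiv} {d : Q.V → ℕ}
    (g : ∀ x : Q.V, Matrix.GeneralLinearGroup (Fin (d x)) K) (M : Rep K Q d) :
    Rep K Q d :=
  ⟨fun a => (g (Q.t a) : Matrix (Fin (d (Q.t a))) (Fin (d (Q.t a))) K) * M.mat a *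
    (((g (Q.s a))⁻¹ : Matrix.GeneralLinearGroup (Fin (d (Q.s a))) K) :
      Matrix (Fin (d (Q.s a))) (Fin (d (Q.s a))) K)⟩

/-- Two points are isomorphic as modules iff they lie in the same `GL(d)`-orbit. -/
def Iso {Q : Quiv} {d : Q.V → ℕ} (M N : Rep K Q d) : Prop :=
  ∃ g, glAct K g M = N

/-- The `GL(d)`-orbit of a point of the representation space. -/
def glOrbit {Q : Quiv} {d : Q.V → ℕ} (M : Rep K Q d) : Set (Rep K Q d) :=
  {N | Iso K M N}

def IsGLInvariant {Q : Quiv} {d : Q.V → ℕ} (C : Set (Rep K Q d)) : Prop :=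
  ∀ g M, M ∈ C → glAct K g M ∈ C

/-- `C` is the closure of a single `GL(d)`-orbit. -/
def IsOrbitClosure {Q : Quiv} {d : Q.V → ℕ} (C : Set (Rep K Q d)) : Prop :=
  ∃ M : Rep K Q d, C = closure (glOrbit K M)

/-- Paths in a quiver, via Mathlib's `Quiver.Path`. -/
instance quivQuiver (Q : Quiv) : Quiver Q.V :=
  ⟨fun x y => {a : Q.Ar // Q.s a = x ∧ Q.t a = y}⟩

/-- The linear map attached to an arrow by a representation. -/
def arrowEval {Q : Quiv} {d : Q.V → ℕ} (M : Rep K Q d) {x y : Q.V} (e : x ⟶ y) :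
    (Fin (d x) → K) →ₗ[K] (Fin (d y) → K) := by
  obtain ⟨a, rfl, rfl⟩ := e
  exact (M.mat a).mulVecLin

/-- The linear map attached to a path by a representation. -/
def pathEval {Q : Quiv} {d : Q.V → ℕ} (M : Rep K Q d) :
    {x y : Q.V} → Quiver.Path x y → ((Fin (d x) → K) →ₗ[K] (Fin (d y) → K))
  | _, _, Quiver.Path.nil => LinearMap.id
  | _, _, Quiver.Path.cons p e => (arrowEval K M e).comp (pathEval M p)

/-- The evaluation of a K-linear combination of parallel paths (an element of the
path algebra) on a representation. -/
noncomputable def relEval {Q : Quiv} {d : Q.V → ℕ} (M : Rep K Q d) {x y : Q.V}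
    (r : Quiver.Path x y →₀ K) : (Fin (d x) → K) →ₗ[K] (Fin (d y) → K) :=
  r.sum fun p c => c • pathEval K M p

/-- A set of relations for a quiver: admissible elements of the path algebra. -/
structure RelSet (Q : Quiv) where
  rels : Set (Σ x y : Q.V, (Quiver.Path x y →₀ K))

/-- The module variety `mod(A,d)` of the bound quiver algebra `A = KQ/I`,
`I = ⟨rels⟩`: the locus where all relations vanish. -/
noncomputable def modVar {Q : Quiv} (R : RelSet K Q) (d : Q.V → ℕ) : Set (Rep K Q d) :=
  {M | ∀ r ∈ R.rels, relEval K M r.2.2 = 0}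

/-- `Q` has no oriented cycles. -/
def Quiv.IsAcyclic (Q : Quiv) : Prop :=
  ∀ (x : Q.V) (p : Quiver.Path x x), p = Quiver.Path.nil

/-- Admissibility of the ideal of relations, encoded semantically:
every relation lies in (the span of paths of) length `≥ 2`, and some power of the
arrow ideal is contained in the ideal of relations (i.e. sufficiently long paths
act by `0` on every module of the algebra). -/
noncomputable def RelSet.IsAdmissible {Q : Quiv} (R : RelSet K Q) : Prop :=
  (∀ r ∈ R.rels, ∀ p ∈ (r.2.2).support, 2 ≤ p.length) ∧
  ∃ L : ℕ, ∀ (d : Q.V → ℕ), ∀ M ∈ modVar K R d, ∀ (x y : Q.V) (p : Quiver.Path x y),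
    L ≤ p.length → pathEval K M p = 0

/-- A subrepresentation (= submodule) of a representation. -/
structure SubRep {Q : Quiv} {d : Q.V → ℕ} (M : Rep K Q d) where
  space : ∀ x : Q.V, Submodule K (Fin (d x) → K)
  stable : ∀ a : Q.Ar, ∀ v ∈ space (Q.s a), (M.mat a).mulVec v ∈ space (Q.t a)

/-- The dimension vector of a subrepresentation. -/
noncomputable def SubRep.dimVec {Q : Quiv} {d : Q.V → ℕ} {M : Rep K Q d}
    (W : SubRep K M) : Q.V → ℕ :=
  fun x => Module.finrank K (W.space x)

/-- The pairing `θ(e) = ∑ₓ θ(x) e(x)` of a weight with a dimension vector. -/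
def wt {Q : Quiv} (θ : Q.V → ℤ) (e : Q.V → ℕ) : ℤ := ∑ x : Q.V, θ x * (e x : ℤ)

/-- King's θ-semi-stability. -/
def IsSemiStable {Q : Quiv} {d : Q.V → ℕ} (θ : Q.V → ℤ) (M : Rep K Q d) : Prop :=
  wt θ d = 0 ∧ ∀ W : SubRep K M, wt θ (W.dimVec K) ≤ 0

/-- King's θ-stability. -/
def IsStable {Q : Quiv} {d : Q.V → ℕ} (θ : Q.V → ℤ) (M : Rep K Q d) : Prop :=
  d ≠ 0 ∧ wt θ d = 0 ∧
    ∀ W : SubRep K M, W.dimVec K ≠ 0 → W.dimVec K ≠ d → wt θ (W.dimVec K) < 0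

/-- Morphisms of representations. -/
def IsHom {Q : Quiv} {d d' : Q.V → ℕ} (M : Rep K Q d) (N : Rep K Q d')
    (φ : ∀ x : Q.V, Matrix (Fin (d' x)) (Fin (d x)) K) : Prop :=
  ∀ a : Q.Ar, φ (Q.t a) * M.mat a = N.mat a * φ (Q.s a)

/-- Endomorphisms of a representation. -/
def IsEndo {Q : Quiv} {d : Q.V → ℕ} (M : Rep K Q d)
    (φ : ∀ x : Q.V, Matrix (Fin (d x)) (Fin (d x)) K) : Prop :=
  IsHom K M M φ

/-- A Schur module: all endomorphisms are scalar, i.e. `End_A(M) ≅ K`. -/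
def IsSchur {Q : Quiv} {d : Q.V → ℕ} (M : Rep K Q d) : Prop :=
  ∀ φ, IsEndo K M φ → ∃ c : K, ∀ x : Q.V, φ x = c • (1 : Matrix (Fin (d x)) (Fin (d x)) K)

/-- The direct sum of two representations. -/
def dsum {Q : Quiv} {d₁ d₂ : Q.V → ℕ} (M : Rep K Q d₁) (N : Rep K Q d₂) :
    Rep K Q (d₁ + d₂) :=
  ⟨fun a => Matrix.reindex finSumFinEquiv finSumFinEquiv
    (Matrix.fromBlocks (M.mat a) 0 0 (N.mat a))⟩

/-- Transport of a representation along an equality of dimension vectors. -/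
def recast {Q : Quiv} {d d' : Q.V → ℕ} (h : d = d') (M : Rep K Q d) : Rep K Q d' :=
  h ▸ M

/-- The dimension vector of a list of representations. -/
def sumDim {Q : Quiv} : List (Σ e : Q.V → ℕ, Rep K Q e) → (Q.V → ℕ)
  | [] => 0
  | x :: L => x.1 + sumDim L

/-- The direct sum of a list of representations. -/
def listSum {Q : Quiv} : (L : List (Σ e : Q.V → ℕ, Rep K Q e)) → Rep K Q (sumDim K L)
  | [] => ⟨fun _ => 0⟩
  | x :: L => dsum K x.2 (listSum L)

/-- `M` is isomorphic to the direct sum of the members of the list `L`. -/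
def IsDirectSumOf {Q : Quiv} {d : Q.V → ℕ} (M : Rep K Q d)
    (L : List (Σ e : Q.V → ℕ, Rep K Q e)) : Prop :=
  ∃ h : sumDim K L = d, Iso K (recast K h (listSum K L)) M

/-- Indecomposability of a representation. -/
def Indec {Q : Quiv} {d : Q.V → ℕ} (M : Rep K Q d) : Prop :=
  d ≠ 0 ∧ ∀ (d₁ d₂ : Q.V → ℕ) (M₁ : Rep K Q d₁) (M₂ : Rep K Q d₂) (h : d₁ + d₂ = d),
    d₁ ≠ 0 → d₂ ≠ 0 → ¬ Iso K (recast K h (dsum K M₁ M₂)) M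

/-- An irreducible component of a (closed) subvariety `Z` of the representation
space: a maximal irreducible closed subset of `Z`. -/
def IsIrrComp {Q : Quiv} {d : Q.V → ℕ} (Z C : Set (Rep K Q d)) : Prop :=
  C ⊆ Z ∧ IsClosed C ∧ IsIrreducible C ∧
    ∀ D : Set (Rep K Q d), D ⊆ Z → IsClosed D → IsIrreducible D → C ⊆ D → C = D

/-- The θ-semi-stable locus of `C`. -/
def ssLocus {Q : Quiv} {d : Q.V → ℕ} (C : Set (Rep K Q d)) (θ : Q.V → ℤ) :
    Set (Rep K Q d) :=
  {M | M ∈ C ∧ IsSemiStable K θ M}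

/-- S-equivalence on the semistable locus: orbit closures meet inside the
semistable locus.  The GIT quotient identifies exactly S-equivalent points. -/
def SEquiv {Q : Quiv} {d : Q.V → ℕ} (C : Set (Rep K Q d)) (θ : Q.V → ℤ)
    (M N : ↥(ssLocus K C θ)) : Prop :=
  (closure (glOrbit K M.1) ∩ closure (glOrbit K N.1) ∩ ssLocus K C θ).Nonempty

/-- The moduli space `M(C)^{ss}_θ` of θ-semi-stable modules in `C`, realized
(as a topological space) as the quotient of the semistable locus of `C` by
S-equivalence; its points are the θ-polystable modules in `C`. -/
def ModuliSpace {Q : Quiv} {d : Q.V → ℕ} (C : Set (Rep K Q d)) (θ : Q.V → ℤ) : Type :=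
  Quot (SEquiv K C θ)

noncomputable instance {Q : Quiv} {d : Q.V → ℕ} (C : Set (Rep K Q d)) (θ : Q.V → ℤ) :
    TopologicalSpace (ModuliSpace K C θ) :=
  instTopologicalSpaceQuot

/-- The image of `C^{ss}_θ` in the moduli space of the ambient variety `Z`:
this is `M(C)^{ss}_θ` as a (closed) subvariety of `M(Z)^{ss}_θ`. -/
def moduliImage {Q : Quiv} {d : Q.V → ℕ} (Z C : Set (Rep K Q d)) (θ : Q.V → ℤ) :
    Set (ModuliSpace K Z θ) :=
  Quot.mk _ '' {M : ↥(ssLocus K Z θ) | M.1 ∈ C}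

/-- The `m`-th symmetric power of a topological space. -/
def SymPow (m : ℕ) (X : Type*) [TopologicalSpace X] : Type _ :=
  Quot (fun f g : Fin m → X => ∃ σ : Equiv.Perm (Fin m), f = g ∘ σ)

noncomputable instance (m : ℕ) (X : Type*) [TopologicalSpace X] :
    TopologicalSpace (SymPow m X) :=
  instTopologicalSpaceQuot

/-- Projective `m`-space over `K` with its Zariski topology (quotient of the
punctured affine cone). -/
def ProjSpace (m : ℕ) : Type :=
  Quot (fun v w : {x : AffSp K (Fin (m + 1)) // ∃ i, x i ≠ 0} =>
    ∃ c : K, c ≠ 0 ∧ ∀ i, w.1 i = c * v.1 i)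

noncomputable instance (m : ℕ) : TopologicalSpace (ProjSpace K m) :=
  instTopologicalSpaceQuot

/-- A product of projective spaces `ℙ^{m 0} × ⋯ × ℙ^{m (n-1)}` over `K`, with its
Zariski topology (quotient of a product of punctured affine cones, carrying the
Zariski topology of the total affine space). -/
def ProdProj (n : ℕ) (m : Fin n → ℕ) : Type :=
  Quot (fun v w : {x : AffSp K (Σ i : Fin n, Fin (m i + 1)) // ∀ i, ∃ j, x ⟨i, j⟩ ≠ 0} =>
    ∃ c : Fin n → K, (∀ i, c i ≠ 0) ∧ ∀ i j, w.1 ⟨i, j⟩ = c i * v.1 ⟨i, j⟩)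

noncomputable instance (n : ℕ) (m : Fin n → ℕ) : TopologicalSpace (ProdProj K n m) :=
  instTopologicalSpaceQuot

end ModuliPaper
namespace ModuliPaper

variable (K : Type) [Field K]

/- --------------------- semi-invariants --------------------- -/

/-- The value of the character `χ_θ` of `GL(d)` at `g`:
`χ_θ(g) = ∏ₓ det(g(x))^{θ(x)}`. -/
noncomputable def chiWt {Q : Quiv} {d : Q.V → ℕ} (θ : Q.V → ℤ)
    (g : ∀ x : Q.V, Matrix.GeneralLinearGroup (Fin (d x)) K) : K :=
  ∏ x : Q.V, ((g x : Matrix (Fin (d x)) (Fin (d x)) K).det) ^ (θ x)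

/-- A semi-invariant of weight `χ_θ` on `C`: a regular (polynomial) function on
`C` satisfying `f(g·M) = χ_θ(g)·f(M)`. -/
def IsSemiInvariant {Q : Quiv} {d : Q.V → ℕ} (C : Set (Rep K Q d)) (θ : Q.V → ℤ)
    (f : ↥C → K) : Prop :=
  (∃ p : MvPolynomial (CoordIdx Q d) K,
      ∀ M : ↥C, f M = MvPolynomial.eval (Rep.coords K M.1) p) ∧
  ∀ (g) (M : ↥C) (h : glAct K g M.1 ∈ C), f ⟨glAct K g M.1, h⟩ = chiWt K θ g * f M

/-- The space `SI(C)_θ` of semi-invariants of weight `χ_θ` on `C`. -/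
noncomputable def SIModule {Q : Quiv} {d : Q.V → ℕ} (C : Set (Rep K Q d))
    (θ : Q.V → ℤ) : Submodule K (↥C → K) where
  carrier := {f | IsSemiInvariant K C θ f}
  add_mem' := by
    rintro f₁ f₂ ⟨⟨p₁, hp₁⟩, hw₁⟩ ⟨⟨p₂, hp₂⟩, hw₂⟩
    refine ⟨⟨p₁ + p₂, fun M => ?_⟩, fun g M h => ?_⟩
    · simp [hp₁ M, hp₂ M]
    · have := hw₁ g M h; have := hw₂ g M h
      simp only [Pi.add_apply, *]; ring
  zero_mem' := ⟨⟨0, fun M => by simp⟩, fun g M h => by simp⟩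
  smul_mem' := by
    rintro c f ⟨⟨p, hp⟩, hw⟩
    refine ⟨⟨c • p, fun M => ?_⟩, fun g M h => ?_⟩
    · simp [hp M, MvPolynomial.smul_eval]; exact (MvPolynomial.smul_eval _ _ _).symm
    · have := hw g M h
      simp only [Pi.smul_apply, smul_eq_mul, *]; ring

/- --------------------- coordinate rings and normality --------------------- -/

/-- The vanishing ideal of a subset of the representation space. -/
noncomputable def vanishingIdeal {Q : Quiv} {d : Q.V → ℕ} (C : Set (Rep K Q d)) :
    Ideal (MvPolynomial (CoordIdx Q d) K) where
  carrier := {p | ∀ M ∈ C, MvPolynomial.eval (Rep.coords K M) p = 0}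
  add_mem' := by intro p q hp hq M hM; simp [hp M hM, hq M hM]
  zero_mem' := by intro M hM; simp
  smul_mem' := by intro c p hp M hM; simp [smul_eq_mul, hp M hM]

/-- The coordinate ring `K[C]` of a subvariety of the representation space. -/
noncomputable def coordRing {Q : Quiv} {d : Q.V → ℕ} (C : Set (Rep K Q d)) : Type :=
  MvPolynomial (CoordIdx Q d) K ⧸ vanishingIdeal K C

noncomputable instance {Q : Quiv} {d : Q.V → ℕ} (C : Set (Rep K Q d)) :
    CommRing (coordRing K C) :=
  Ideal.Quotient.commRing _

/-- Normality of a variety: its coordinate ring is an integrally closed domain. -/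
def IsNormalVar {Q : Quiv} {d : Q.V → ℕ} (C : Set (Rep K Q d)) : Prop :=
  IsDomain (coordRing K C) ∧ IsIntegrallyClosed (coordRing K C)

/- --------------------- gentle and string algebras --------------------- -/

/-- "at most one element" of a set. -/
def AtMostOne {α : Type*} (s : Set α) : Prop := ∀ a ∈ s, ∀ b ∈ s, a = b

/-- "at most two elements" of a set. -/
def AtMostTwo {α : Type*} (s : Set α) : Prop :=
  ∀ a ∈ s, ∀ b ∈ s, ∀ c ∈ s, a = b ∨ a = c ∨ b = c

/-- A set of monomial (length-two) relations: pairs `(a,b)` of composable arrows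
(`a` followed by `b`), generating the ideal `I = ⟨{ba : (a,b) ∈ R}⟩`. -/
structure PairRels (Q : Quiv) where
  R : Set (Q.Ar × Q.Ar)
  comp : ∀ p ∈ R, Q.t p.1 = Q.s p.2

/-- The module variety of the algebra `KQ/⟨R⟩` with length-two monomial
relations `R`: the locus where all composites `M(b)M(a)`, `(a,b) ∈ R`, vanish. -/
def pairModVar {Q : Quiv} (P : PairRels Q) (d : Q.V → ℕ) : Set (Rep K Q d) :=
  {M | ∀ a b, (hab : (a, b) ∈ P.R) →
    ∀ (i : Fin (d (Q.t b))) (j : Fin (d (Q.s a))),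
      ∑ k : Fin (d (Q.t a)),
        M.mat b i (finCongr (congrArg d (P.comp (a, b) hab)) k) * M.mat a k j = 0}

/-- The gentle conditions on a bound quiver `(Q, I)` with `I` generated by the
length-two paths in `R`. -/
def PairRels.IsGentle {Q : Quiv} (P : PairRels Q) : Prop :=
  (∀ x : Q.V, AtMostTwo {a | Q.s a = x} ∧ AtMostTwo {a | Q.t a = x}) ∧
  (∀ a : Q.Ar, AtMostOne {b | Q.t a = Q.s b ∧ (a, b) ∉ P.R} ∧
               AtMostOne {b | Q.t b = Q.s a ∧ (b, a) ∉ P.R}) ∧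
  (∀ a : Q.Ar, AtMostOne {b | (a, b) ∈ P.R} ∧ AtMostOne {b | (b, a) ∈ P.R})

/-- The length-two path `a`-then-`b` in `Q`. -/
def path2 {Q : Quiv} (a b : Q.Ar) (h : Q.t a = Q.s b) : Quiver.Path (Q.s a) (Q.t b) :=
  (Quiver.Path.nil.cons (⟨a, rfl, rfl⟩ : (Q.s a : Q.V) ⟶ Q.t a)).cons
    (⟨b, h.symm, rfl⟩ : (Q.t a : Q.V) ⟶ Q.t b)

/-- A set of monomial relations (paths of length `≥ 2`). -/
structure MonRels (Q : Quiv) where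
  R : Set (Σ x y : Q.V, Quiver.Path x y)
  len2 : ∀ r ∈ R, 2 ≤ r.2.2.length

/-- The module variety of the monomial algebra `KQ/⟨R⟩`. -/
def monModVar {Q : Quiv} (R : MonRels Q) (d : Q.V → ℕ) : Set (Rep K Q d) :=
  {M | ∀ r ∈ R.R, pathEval K M r.2.2 = 0}

/-- The length-two path `a`-then-`b` lies in the monomial ideal `⟨R⟩`. -/
def MonRels.pairIn {Q : Quiv} (R : MonRels Q) (a b : Q.Ar) : Prop :=
  ∃ h : Q.t a = Q.s b, (⟨Q.s a, Q.t b, path2 a b h⟩ : Σ x y : Q.V, Quiver.Path x y) ∈ R.R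

/-- The string algebra conditions on a monomial bound quiver `(Q, ⟨R⟩)`. -/
def MonRels.IsString {Q : Quiv} (R : MonRels Q) : Prop :=
  (∀ x : Q.V, AtMostTwo {a | Q.s a = x} ∧ AtMostTwo {a | Q.t a = x}) ∧
  (∀ a : Q.Ar, AtMostOne {b | Q.t a = Q.s b ∧ ¬ R.pairIn a b} ∧
               AtMostOne {b | Q.t b = Q.s a ∧ ¬ R.pairIn b a})

/-- A coloring of a quiver: a map on arrows whose fibres are directed paths. -/
structure Coloring (Q : Quiv) (S : Type) where
  c : Q.Ar → S
  isPath : ∀ s : S, ∃ L : List Q.Ar, L.Nodup ∧ (∀ a, a ∈ L ↔ c a = s) ∧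
    L.Chain' (fun a b => Q.t a = Q.s b)

/-- The set of length-two relations `I_c` induced by a coloring: all composable
pairs of arrows of the same color. -/
def colorRels {Q : Quiv} {S : Type} (col : Coloring Q S) : PairRels Q where
  R := {p | Q.t p.1 = Q.s p.2 ∧ col.c p.1 = col.c p.2}
  comp := fun _ hp => hp.1

/- --------------------- band modules (string algebras) --------------------- -/

/-- Over an acyclic string algebra, the indecomposable modules are string and
band modules (Butler–Ringel), and the band modules are exactly the
indecomposables `M` with `dim M = ∑ₐ rank M(a)`. -/
def IsBand {Q : Quiv} {d : Q.V → ℕ} (M : Rep K Q d) : Prop :=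
  Indec K M ∧ (∑ x : Q.V, d x) = ∑ a : Q.Ar, (M.mat a).rank

/-- `M` is (isomorphic to) a direct sum of band modules. -/
def IsSumOfBands {Q : Quiv} {d : Q.V → ℕ} (M : Rep K Q d) : Prop :=
  ∃ L : List (Σ e : Q.V → ℕ, Rep K Q e), (∀ p ∈ L, IsBand K p.2) ∧ IsDirectSumOf K M L

/-- A regular irreducible component: the generic module of `C` is a direct sum
of band modules. -/
def IsGenericallyBands {Q : Quiv} {d : Q.V → ℕ} (C : Set (Rep K Q d)) : Prop :=
  ∃ U : Set (Rep K Q d), IsOpen U ∧ (U ∩ C).Nonempty ∧ ∀ M ∈ U ∩ C, IsSumOfBands K M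

end ModuliPaper
namespace ModuliPaper

variable (K : Type) [Field K]

/- --------------------- tame and Schur-tame --------------------- -/

/-- A one-parameter algebraic family of `d`-dimensional representations defined
over a localization `K[t]_f` of `K[t]`: a free `K[t]_f`-module structure is
encoded by matrices of polynomials divided by a power of `f`. -/
structure ParamFamily (Q : Quiv) (d : Q.V → ℕ) where
  f : Polynomial K
  hf : f ≠ 0
  k : ℕ
  num : ∀ a : Q.Ar, Matrix (Fin (d (Q.t a))) (Fin (d (Q.s a))) (Polynomial K)

/-- The member of the family at the parameter `lam` (i.e. `T ⊗_{K[t]_f} K[t]/(t-lam)`). -/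
noncomputable def ParamFamily.evalAt {Q : Quiv} {d : Q.V → ℕ} (F : ParamFamily K Q d)
    (lam : K) : Rep K Q d :=
  ⟨fun a => Matrix.of fun i j =>
    Polynomial.eval lam (F.num a i j) / (Polynomial.eval lam F.f) ^ F.k⟩

/-- The algebra with module varieties `MV` is Schur-tame: for every dimension
vector `d` there are finitely many one-parameter families of `d`-dimensional
modules, each consisting of pairwise non-isomorphic Schur modules (a
Schur-embedding `T_i ⊗_{R_i} -`), such that every `d`-dimensional Schur module
— up to finitely many isomorphism classes — belongs to one of the families. -/
noncomputable def IsSchurTame {Q : Quiv} (MV : ∀ d : Q.V → ℕ, Set (Rep K Q d)) : Prop :=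
  ∀ d : Q.V → ℕ, ∃ (n : ℕ) (F : Fin n → ParamFamily K Q d),
    (∀ i lam, Polynomial.eval lam (F i).f ≠ 0 →
      (F i).evalAt K lam ∈ MV d ∧ IsSchur K ((F i).evalAt K lam)) ∧
    (∀ i lam₁ lam₂, Polynomial.eval lam₁ (F i).f ≠ 0 → Polynomial.eval lam₂ (F i).f ≠ 0 →
      Iso K ((F i).evalAt K lam₁) ((F i).evalAt K lam₂) → lam₁ = lam₂) ∧
    ∃ Exc : Set (Rep K Q d), Exc.Finite ∧
      ∀ M ∈ MV d, IsSchur K M →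
        (∃ i lam, Polynomial.eval lam (F i).f ≠ 0 ∧ Iso K M ((F i).evalAt K lam)) ∨
        (∃ E ∈ Exc, Iso K M E)

/-- The algebra with module varieties `MV` is tame: for every dimension vector
`d` there are finitely many one-parameter families of `d`-dimensional modules,
each consisting of pairwise non-isomorphic indecomposable modules (a
representation embedding `T_i ⊗_{R_i} -`), such that every `d`-dimensional
indecomposable module — up to finitely many isomorphism classes — belongs to
one of the families. -/
noncomputable def IsTame {Q : Quiv} (MV : ∀ d : Q.V → ℕ, Set (Rep K Q d)) : Prop :=
  ∀ d : Q.V → ℕ, ∃ (n : ℕ) (F : Fin n → ParamFamily K Q d),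
    (∀ i lam, Polynomial.eval lam (F i).f ≠ 0 →
      (F i).evalAt K lam ∈ MV d ∧ Indec K ((F i).evalAt K lam)) ∧
    (∀ i lam₁ lam₂, Polynomial.eval lam₁ (F i).f ≠ 0 → Polynomial.eval lam₂ (F i).f ≠ 0 →
      Iso K ((F i).evalAt K lam₁) ((F i).evalAt K lam₂) → lam₁ = lam₂) ∧
    ∃ Exc : Set (Rep K Q d), Exc.Finite ∧
      ∀ M ∈ MV d, Indec K M →
        (∃ i lam, Polynomial.eval lam (F i).f ≠ 0 ∧ Iso K M ((F i).evalAt K lam)) ∨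
        (∃ E ∈ Exc, Iso K M E)

/- --------------------- strictly wild algebras --------------------- -/

/-- The representation of `Q` of dimension vector `m • e` obtained from a
template `T` of matrices over the free algebra `K⟨x,y⟩` (encoding an
`A`-`K⟨x,y⟩`-bimodule free of finite rank over `K⟨x,y⟩`) by specializing
`(x,y)` to the pair of `m × m` matrices `(X,Y)`. -/
noncomputable def blockRep {Q : Quiv} (e : Q.V → ℕ) (m : ℕ)
    (T : ∀ a : Q.Ar, Matrix (Fin (e (Q.t a))) (Fin (e (Q.s a))) (FreeAlgebra K (Fin 2)))
    (X Y : Matrix (Fin m) (Fin m) K) : Rep K Q (fun x => e x * m) :=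
  ⟨fun a => Matrix.of fun i j =>
    (FreeAlgebra.lift K ![X, Y] (T a (finProdFinEquiv.symm i).1 (finProdFinEquiv.symm j).1))
      (finProdFinEquiv.symm i).2 (finProdFinEquiv.symm j).2⟩

/-- The block-diagonal family of matrices induced by an `m' × m` matrix `ψ`:
the image of a morphism of `K⟨x,y⟩`-modules under the functor `T ⊗ -`. -/
def blockify {Q : Quiv} (e : Q.V → ℕ) {m m' : ℕ} (ψ : Matrix (Fin m') (Fin m) K) :
    ∀ x : Q.V, Matrix (Fin (e x * m')) (Fin (e x * m)) K :=
  fun _ => Matrix.of fun i j =>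
    if (finProdFinEquiv.symm i).1 = (finProdFinEquiv.symm j).1 then
      ψ (finProdFinEquiv.symm i).2 (finProdFinEquiv.symm j).2
    else 0

/-- Strict wildness of the algebra with module varieties `MV`: there is an exact
`K`-linear functor `mod K⟨x,y⟩ → mod A`, given by tensoring with a bimodule
free of finite rank over `K⟨x,y⟩` (encoded by a template `T`), which is fully
faithful. -/
noncomputable def IsStrictlyWild {Q : Quiv} (MV : ∀ d : Q.V → ℕ, Set (Rep K Q d)) : Prop :=
  ∃ (e : Q.V → ℕ)
    (T : ∀ a : Q.Ar, Matrix (Fin (e (Q.t a))) (Fin (e (Q.s a))) (FreeAlgebra K (Fin 2))),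
    (∀ (m : ℕ) (X Y : Matrix (Fin m) (Fin m) K),
      blockRep K e m T X Y ∈ MV (fun x => e x * m)) ∧
    (∀ (m m' : ℕ) (X Y : Matrix (Fin m) (Fin m) K) (X' Y' : Matrix (Fin m') (Fin m') K),
      -- functoriality: morphisms of `K⟨x,y⟩`-modules map to morphisms
      (∀ ψ : Matrix (Fin m') (Fin m) K, ψ * X = X' * ψ → ψ * Y = Y' * ψ →
        IsHom K (blockRep K e m T X Y) (blockRep K e m' T X' Y') (blockify K e ψ)) ∧
      -- faithfulness
      (∀ ψ₁ ψ₂ : Matrix (Fin m') (Fin m) K, blockify (Q := Q) K e ψ₁ = blockify K e ψ₂ → ψ₁ = ψ₂) ∧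
      -- fullness
      (∀ φ, IsHom K (blockRep K e m T X Y) (blockRep K e m' T X' Y') φ →
        ∃ ψ : Matrix (Fin m') (Fin m) K, ψ * X = X' * ψ ∧ ψ * Y = Y' * ψ ∧ φ = blockify K e ψ))

/- --------------------- θ-stable decompositions --------------------- -/

/-- The list of representations `N i j`, `j < m i`, over the indices `i` with
`i < l`. -/
def famList {Q : Quiv} {nn : ℕ} (dd : Fin nn → Q.V → ℕ) (m : Fin nn → ℕ) (l : ℕ)
    (N : ∀ i : Fin nn, Fin (m i) → Rep K Q (dd i)) : List (Σ e : Q.V → ℕ, Rep K Q e) :=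
  ((List.finRange nn).filter (fun i : Fin nn => decide ((i : ℕ) < l))).flatMap
    (fun i : Fin nn => (List.finRange (m i)).map (fun j => ⟨dd i, N i j⟩))

/-- A θ-stable decomposition `C = m₀·C₀ ∔ m₁·C₁ ∔ ⋯`: for the generic module
`M ∈ C^{ss}_θ`, the associated θ-polystable module `gr_θ(M)` (the unique
polystable module in the closure of the orbit of `M` within the semistable
locus) is a direct sum of θ-stable modules, `m i` of which belong to `Cs i`. -/
def ThetaStableDecomp {Q : Quiv} {d : Q.V → ℕ} (C : Set (Rep K Q d)) (θ : Q.V → ℤ)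
    {nn : ℕ} (dd : Fin nn → Q.V → ℕ) (m : Fin nn → ℕ)
    (Cs : ∀ i, Set (Rep K Q (dd i))) : Prop :=
  ∃ U : Set (Rep K Q d), IsOpen U ∧ (U ∩ C).Nonempty ∧
    ∀ M ∈ U ∩ C, IsSemiStable K θ M ∧
      ∃ N : ∀ i, Fin (m i) → Rep K Q (dd i),
        (∀ i j, N i j ∈ Cs i ∧ IsStable K θ (N i j)) ∧
        ∃ P ∈ closure (glOrbit K M), IsSemiStable K θ P ∧
          IsDirectSumOf K P (famList K dd m nn N)

/-- The dimension vector `∑_{i < l} m i • dd i`. -/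
def belowDim {Q : Quiv} {nn : ℕ} (dd : Fin nn → Q.V → ℕ) (m : Fin nn → ℕ) (l : ℕ) :
    Q.V → ℕ :=
  fun x => ∑ i ∈ Finset.univ.filter (fun i : Fin nn => (i : ℕ) < l), m i * dd i x

/-- The direct sum locus `C₀^{⊕ m₀} ⊕ ⋯ ⊕ C_{l-1}^{⊕ m_{l-1}}`. -/
def sumLocusBelow {Q : Quiv} {nn : ℕ} (dd : Fin nn → Q.V → ℕ) (m : Fin nn → ℕ) (l : ℕ)
    (Cs : ∀ i, Set (Rep K Q (dd i))) : Set (Rep K Q (belowDim dd m l)) :=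
  {M | ∃ N : ∀ i, Fin (m i) → Rep K Q (dd i),
    (∀ (i : Fin nn) (j : Fin (m i)), (i : ℕ) < l → N i j ∈ Cs i) ∧ IsDirectSumOf K M (famList K dd m l N)}

/- --------------------- extensions --------------------- -/

/-- The extension of `N` by `M` (`0 → M → Z → N → 0`) determined by the blocks
`E`: `Z(a) = [[M(a), E(a)], [0, N(a)]]`. -/
def triSum {Q : Quiv} {d₁ d₂ : Q.V → ℕ} (M : Rep K Q d₁) (N : Rep K Q d₂)
    (E : ∀ a : Q.Ar, Matrix (Fin (d₁ (Q.t a))) (Fin (d₂ (Q.s a))) K) :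
    Rep K Q (d₁ + d₂) :=
  ⟨fun a => Matrix.reindex finSumFinEquiv finSumFinEquiv
    (Matrix.fromBlocks (M.mat a) (E a) 0 (N.mat a))⟩

/-- `ext¹_A(D, E) = 0`: the minimal dimension of `Ext¹_A(X,Y)` over
`(X,Y) ∈ D × E` vanishes, i.e. there is a pair `(X,Y) ∈ D × E` all of whose
extensions (inside the module variety `MV`) split. -/
def Ext1Vanishes {Q : Quiv} (MV : ∀ e : Q.V → ℕ, Set (Rep K Q e)) {dX dY : Q.V → ℕ}
    (D : Set (Rep K Q dX)) (E : Set (Rep K Q dY)) : Prop :=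
  ∃ X ∈ D, ∃ Y ∈ E, ∀ B, triSum K Y X B ∈ MV (dY + dX) →
    Iso K (triSum K Y X B) (dsum K Y X)

end ModuliPaper


set_option linter.unusedSectionVars false
namespace ModuliPaper

variable {K : Type} [Field K] {Q : Quiv} {d d' d₁ d₂ : Q.V → ℕ}

lemma rep_ext {M N : Rep K Q d} (h : M.mat = N.mat) : M = N := by
  cases M; cases N; simpa using h

lemma matrix_congr {m n : ℕ} (X : Matrix (Fin m) (Fin n) K) {i i' : Fin m} {j j' : Fin n}
    (hi : i.val = i'.val) (hj : j.val = j'.val) : X i j = X i' j' := by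
  congr 1 <;> exact Fin.ext (by omega)

section glact
variable (g g' : ∀ x : Q.V, Matrix.GeneralLinearGroup (Fin (d x)) K) (M : Rep K Q d)

lemma glAct_one : glAct K (1 : ∀ x : Q.V, Matrix.GeneralLinearGroup (Fin (d x)) K) M = M := by
  apply rep_ext; funext a
  simp [glAct]

lemma glAct_glAct : glAct K g (glAct K g' M) = glAct K (g * g') M := by
  apply rep_ext; funext a
  simp only [glAct, Pi.mul_apply, Units.val_mul, mul_inv_rev]
  simp only [Matrix.mul_assoc]

lemma iso_refl : Iso K M M := ⟨1, glAct_one M⟩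

lemma iso_symm {M N : Rep K Q d} (h : Iso K M N) : Iso K N M := by
  obtain ⟨g, rfl⟩ := h
  exact ⟨g⁻¹, by rw [glAct_glAct, inv_mul_cancel, glAct_one]⟩

lemma iso_trans {M N P : Rep K Q d} (h1 : Iso K M N) (h2 : Iso K N P) : Iso K M P := by
  obtain ⟨g1, rfl⟩ := h1; obtain ⟨g2, rfl⟩ := h2
  exact ⟨g2 * g1, (glAct_glAct _ _ _).symm⟩

lemma rank_glAct (a : Q.Ar) : ((glAct K g M).mat a).rank = (M.mat a).rank := by
  show ((_ * M.mat a * _) : Matrix _ _ K).rank = _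
  rw [Matrix.rank_mul_eq_left_of_isUnit_det _ _
      ((Matrix.isUnit_iff_isUnit_det _).mp (g (Q.s a))⁻¹.isUnit),
    Matrix.rank_mul_eq_right_of_isUnit_det _ _
      ((Matrix.isUnit_iff_isUnit_det _).mp (g (Q.t a)).isUnit)]

end glact

/-- total dimension -/
def dimsum (d : Q.V → ℕ) : ℕ := ∑ x : Q.V, d x

/-- total rank -/
noncomputable def rksum (M : Rep K Q d) : ℕ := ∑ a : Q.Ar, (M.mat a).rank

lemma rksum_iso {M N : Rep K Q d} (h : Iso K M N) : rksum M = rksum N := by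
  obtain ⟨g, rfl⟩ := h
  unfold rksum; exact (Finset.sum_congr rfl fun a _ => (rank_glAct g M a)).symm

end ModuliPaper
namespace ModuliPaper

variable {K : Type} [Field K] {Q : Quiv} {d d' d₁ d₂ : Q.V → ℕ}

section recast
variable (h : d = d') (M N : Rep K Q d)

lemma recast_mat (a : Q.Ar) (i : Fin (d' (Q.t a))) (j : Fin (d' (Q.s a))) :
    (recast K h M).mat a i j
      = M.mat a ⟨i.val, by rw [h]; exact i.isLt⟩ ⟨j.val, by rw [h]; exact j.isLt⟩ := by
  subst h; rfl

lemma recast_rksum : rksum (recast K h M) = rksum M := by subst h; rfl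

lemma recast_iso (hMN : Iso K M N) : Iso K (recast K h M) (recast K h N) := by
  subst h; exact hMN

lemma recast_mem_pairModVar (P : PairRels Q) (hM : M ∈ pairModVar K P d) :
    recast K h M ∈ pairModVar K P d' := by subst h; exact hM

lemma iso_of_recast_iso {X : Rep K Q d} {Y : Rep K Q d'} (hXY : Iso K (recast K h X) Y)
    {X' : Rep K Q d} (hXX : Iso K X X') : Iso K (recast K h X') Y := by
  subst h; exact iso_trans (iso_symm hXX) hXY

end recast

lemma isSumOfBands_iso {M N : Rep K Q d} (h : Iso K M N) (hM : IsSumOfBands K M) :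
    IsSumOfBands K N := by
  obtain ⟨L, hL, hsum, hiso⟩ := hM
  exact ⟨L, hL, hsum, iso_trans hiso h⟩

lemma isSumOfBands_recast (h : d = d') {M : Rep K Q d} (hM : IsSumOfBands K M) :
    IsSumOfBands K (recast K h M) := by subst h; exact hM

/-- matrix-product form of the relations defining `pairModVar`. -/
lemma mem_pairModVar_iff (P : PairRels Q) (M : Rep K Q d) :
    M ∈ pairModVar K P d ↔ ∀ a b, (hab : (a, b) ∈ P.R) →
      (M.mat b).submatrix id (finCongr (congrArg d (P.comp (a, b) hab))) * M.mat a = 0 := by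
  constructor
  · intro hM a b hab
    ext i j
    simpa [Matrix.mul_apply] using hM a b hab i j
  · intro hM a b hab i j
    have := congrFun (congrFun (hM a b hab) i) j
    simpa [Matrix.mul_apply] using this

lemma submatrix_id_mul {m n n' p : ℕ} (X : Matrix (Fin m) (Fin n) K)
    (Y : Matrix (Fin n) (Fin p) K) (e : Fin n' → Fin p) :
    (X * Y).submatrix id e = X * (Y.submatrix id e) := by
  ext i j; simp [Matrix.mul_apply]

lemma one_submatrix_mul_right {m n n' : ℕ} (X : Matrix (Fin m) (Fin n) K)
    (e : Fin n' ≃ Fin n) :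
    X * ((1 : Matrix (Fin n) (Fin n) K).submatrix id e) = X.submatrix id e := by
  ext i j
  simp [Matrix.mul_apply, Matrix.one_apply]

lemma glAct_key {x y : Q.V} (h : x = y) (g : ∀ v : Q.V, Matrix.GeneralLinearGroup (Fin (d v)) K) :
    ((g y)⁻¹ : Matrix.GeneralLinearGroup (Fin (d y)) K).val.submatrix id
        (finCongr (congrArg d h))
      = (1 : Matrix (Fin (d y)) (Fin (d y)) K).submatrix id (finCongr (congrArg d h)) *
        ((g x)⁻¹ : Matrix.GeneralLinearGroup (Fin (d x)) K).val := by
  subst h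
  simp

lemma glAct_mem_pairModVar (P : PairRels Q)
    (g : ∀ v : Q.V, Matrix.GeneralLinearGroup (Fin (d v)) K) {M : Rep K Q d}
    (hM : M ∈ pairModVar K P d) : glAct K g M ∈ pairModVar K P d := by
  rw [mem_pairModVar_iff] at hM ⊢
  intro a b hab
  have hcomp : Q.t a = Q.s b := P.comp (a, b) hab
  have hM0 : (M.mat b).submatrix id (finCongr (congrArg d hcomp)) * M.mat a = 0 := hM a b hab
  have hinv : (((g (Q.t a))⁻¹ : Matrix.GeneralLinearGroup (Fin (d (Q.t a))) K) :
      Matrix (Fin (d (Q.t a))) (Fin (d (Q.t a))) K) * ((g (Q.t a)) :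
      Matrix (Fin (d (Q.t a))) (Fin (d (Q.t a))) K) = 1 := by
    rw [← Units.val_mul, inv_mul_cancel, Units.val_one]
  show ((g (Q.t b)).val * M.mat b * ((g (Q.s b))⁻¹).val).submatrix id
      (finCongr (congrArg d hcomp)) * ((g (Q.t a)).val * M.mat a * ((g (Q.s a))⁻¹).val) = 0
  rw [submatrix_id_mul, glAct_key hcomp g]
  calc (g (Q.t b)).val * M.mat b *
        ((1 : Matrix (Fin (d (Q.s b))) (Fin (d (Q.s b))) K).submatrix id
          (finCongr (congrArg d hcomp)) * ((g (Q.t a))⁻¹).val) *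
        ((g (Q.t a)).val * M.mat a * ((g (Q.s a))⁻¹).val)
      = (g (Q.t b)).val * (M.mat b *
          (1 : Matrix (Fin (d (Q.s b))) (Fin (d (Q.s b))) K).submatrix id
            (finCongr (congrArg d hcomp))) *
        ((((g (Q.t a))⁻¹).val * (g (Q.t a)).val) * (M.mat a * ((g (Q.s a))⁻¹).val)) := by
        simp only [Matrix.mul_assoc]
    _ = (g (Q.t b)).val * ((M.mat b).submatrix id (finCongr (congrArg d hcomp)) * M.mat a) *
        ((g (Q.s a))⁻¹).val := by
        rw [one_submatrix_mul_right, hinv]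
        simp only [Matrix.one_mul, Matrix.mul_assoc]
    _ = 0 := by rw [hM0]; simp

lemma iso_mem_pairModVar (P : PairRels Q) {M N : Rep K Q d} (h : Iso K M N)
    (hM : M ∈ pairModVar K P d) : N ∈ pairModVar K P d := by
  obtain ⟨g, rfl⟩ := h; exact glAct_mem_pairModVar P g hM

end ModuliPaper
set_option linter.unusedVariables false
namespace ModuliPaper

variable {K : Type} [Field K]

lemma range_prodMap' {M N M' N' : Type*} [AddCommGroup M] [AddCommGroup N] [AddCommGroup M']
    [AddCommGroup N'] [Module K M] [Module K N] [Module K M'] [Module K N']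
    (f : M →ₗ[K] M') (g : N →ₗ[K] N') :
    LinearMap.range (f.prodMap g) = (LinearMap.range f).prod (LinearMap.range g) := by
  ext ⟨x, y⟩
  simp only [LinearMap.mem_range, Submodule.mem_prod, Prod.ext_iff]
  constructor
  · rintro ⟨⟨a, b⟩, hab⟩
    exact ⟨⟨a, hab.1⟩, ⟨b, hab.2⟩⟩
  · rintro ⟨⟨a, ha⟩, ⟨b, hb⟩⟩
    exact ⟨(a, b), ⟨ha, hb⟩⟩

/-- the product of two submodules as a linear equivalence -/
def submoduleProdEquiv {M N : Type*} [AddCommGroup M] [AddCommGroup N] [Module K M] [Module K N]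
    (p : Submodule K M) (q : Submodule K N) : (p.prod q) ≃ₗ[K] (p × q) where
  toFun x := (⟨x.1.1, x.2.1⟩, ⟨x.1.2, x.2.2⟩)
  invFun y := ⟨(y.1.1, y.2.1), ⟨y.1.2, y.2.2⟩⟩
  map_add' x y := rfl
  map_smul' c x := rfl
  left_inv x := rfl
  right_inv y := rfl

lemma finrank_submodule_prod {M N : Type*} [AddCommGroup M] [AddCommGroup N] [Module K M]
    [Module K N] [FiniteDimensional K M] [FiniteDimensional K N]
    (p : Submodule K M) (q : Submodule K N) :
    Module.finrank K (p.prod q) = Module.finrank K p + Module.finrank K q := by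
  rw [LinearEquiv.finrank_eq (submoduleProdEquiv p q), Module.finrank_prod]

lemma rank_reindex_rect {k l m n : Type} [Fintype k] [Fintype l] [Fintype m] [Fintype n]
    [DecidableEq k] [DecidableEq l] [DecidableEq m] [DecidableEq n]
    (e₁ : k ≃ m) (e₂ : l ≃ n) (A : Matrix k l K) :
    (Matrix.reindex e₁ e₂ A).rank = A.rank := by
  rw [Matrix.rank, Matrix.rank, Matrix.mulVecLin_reindex, LinearMap.range_comp,
    LinearMap.range_comp_of_range_eq_top _ (LinearMap.range_eq_top.mpr
      (LinearEquiv.funCongrLeft K K e₂).surjective)]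
  exact LinearEquiv.finrank_map_eq _ _

lemma rank_fromBlocks_diag {m₁ m₂ n₁ n₂ : Type} [Fintype m₁] [Fintype m₂] [Fintype n₁]
    [Fintype n₂] [DecidableEq m₁] [DecidableEq m₂] [DecidableEq n₁] [DecidableEq n₂]
    (A : Matrix m₁ n₁ K) (B : Matrix m₂ n₂ K) :
    (Matrix.fromBlocks A 0 0 B).rank = A.rank + B.rank := by
  have hT : (Matrix.fromBlocks A 0 0 B).mulVecLin =
      (LinearEquiv.sumArrowLequivProdArrow m₁ m₂ K K).symm.toLinearMap ∘ₗ
        (A.mulVecLin.prodMap B.mulVecLin) ∘ₗ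
        (LinearEquiv.sumArrowLequivProdArrow n₁ n₂ K K).toLinearMap := by
    apply LinearMap.ext
    intro v
    simp only [Matrix.mulVecLin_apply, LinearMap.coe_comp, Function.comp_apply,
      LinearEquiv.coe_coe]
    rw [Matrix.fromBlocks_mulVec]
    funext i
    cases i <;>
      simp [LinearEquiv.sumArrowLequivProdArrow, Matrix.zero_mulVec, LinearMap.prodMap_apply,
        Equiv.sumArrowEquivProdArrow]
  rw [Matrix.rank, Matrix.rank, Matrix.rank, hT, LinearMap.range_comp,
    LinearMap.range_comp_of_range_eq_top _ (LinearMap.range_eq_top.mpr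
      (LinearEquiv.sumArrowLequivProdArrow n₁ n₂ K K).surjective),
    LinearEquiv.finrank_map_eq, range_prodMap', finrank_submodule_prod]

end ModuliPaper
namespace ModuliPaper

variable {K : Type} [Field K] {Q : Quiv} {d d' d₁ d₂ : Q.V → ℕ}

lemma fse_symm {m n : ℕ} (i : Fin (m + n)) :
    finSumFinEquiv.symm i = if h : i.val < m then Sum.inl ⟨i.val, h⟩
      else Sum.inr ⟨i.val - m, by omega⟩ := by
  rw [Equiv.symm_apply_eq]
  split
  · simp [finSumFinEquiv]
  · apply Fin.ext
    simp [finSumFinEquiv]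
    omega

lemma dsum_mat (M : Rep K Q d₁) (N : Rep K Q d₂) (a : Q.Ar)
    (i : Fin (d₁ (Q.t a) + d₂ (Q.t a))) (j : Fin (d₁ (Q.s a) + d₂ (Q.s a))) :
    (dsum K M N).mat a i j =
      if hi : i.val < d₁ (Q.t a) then
        (if hj : j.val < d₁ (Q.s a) then M.mat a ⟨i.val, hi⟩ ⟨j.val, hj⟩ else 0)
      else
        (if hj : j.val < d₁ (Q.s a) then 0
         else N.mat a ⟨i.val - d₁ (Q.t a), by omega⟩ ⟨j.val - d₁ (Q.s a), by omega⟩) := by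
  show (Matrix.reindex finSumFinEquiv finSumFinEquiv
      (Matrix.fromBlocks (M.mat a) 0 0 (N.mat a))) i j = _
  rw [Matrix.reindex_apply, Matrix.submatrix_apply, fse_symm, fse_symm]
  split <;> split <;> simp

/-- rank of a block-diagonal direct sum is the sum of the ranks -/
lemma dsum_rank (M : Rep K Q d₁) (N : Rep K Q d₂) (a : Q.Ar) :
    ((dsum K M N).mat a).rank = (M.mat a).rank + (N.mat a).rank := by
  show (Matrix.reindex finSumFinEquiv finSumFinEquiv
      (Matrix.fromBlocks (M.mat a) 0 0 (N.mat a))).rank = _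
  rw [rank_reindex_rect, rank_fromBlocks_diag]

lemma rksum_dsum (M : Rep K Q d₁) (N : Rep K Q d₂) :
    rksum (dsum K M N) = rksum M + rksum N := by
  unfold rksum
  rw [← Finset.sum_add_distrib]
  exact Finset.sum_congr rfl fun a _ => dsum_rank M N a

lemma dimsum_add : dimsum (d₁ + d₂) = dimsum d₁ + dimsum d₂ := by
  unfold dimsum
  rw [← Finset.sum_add_distrib]
  rfl

lemma dimsum_eq_zero_iff : dimsum d = 0 ↔ d = 0 := by
  unfold dimsum
  rw [Finset.sum_eq_zero_iff]
  constructor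
  · intro h; funext x; exact h x (Finset.mem_univ x)
  · intro h x _; rw [h]; rfl

lemma recast_dimsum (h : d = d') : dimsum d = dimsum d' := by subst h; rfl

/-- extraction of the two diagonal blocks from the relations on a direct sum -/
lemma dsum_mem_pairModVar (P : PairRels Q) {M : Rep K Q d₁} {N : Rep K Q d₂}
    (h : dsum K M N ∈ pairModVar K P (d₁ + d₂)) :
    M ∈ pairModVar K P d₁ ∧ N ∈ pairModVar K P d₂ := by
  have hblock : ∀ (a : Q.Ar) (hab : Q.t a = Q.s (Prod.snd (a, a))), True := fun _ _ => trivial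
  constructor
  · intro a b hab i j
    have hcomp : Q.t a = Q.s b := P.comp (a, b) hab
    have hd1 : d₁ (Q.t a) = d₁ (Q.s b) := congrArg d₁ hcomp
    have hd2 : d₂ (Q.t a) = d₂ (Q.s b) := congrArg d₂ hcomp
    have lt1 : i.val < (d₁ + d₂) (Q.t b) := Nat.lt_of_lt_of_le i.isLt (Nat.le_add_right _ _)
    have lt2 : j.val < (d₁ + d₂) (Q.s a) := Nat.lt_of_lt_of_le j.isLt (Nat.le_add_right _ _)
    have H := h a b hab ⟨i.val, lt1⟩ ⟨j.val, lt2⟩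
    have key := Fin.sum_univ_add (f := fun k : Fin (d₁ (Q.t a) + d₂ (Q.t a)) =>
      (dsum K M N).mat b ⟨i.val, lt1⟩
          ((finCongr (congrArg (d₁ + d₂) (P.comp (a, b) hab))) k) *
        (dsum K M N).mat a k ⟨j.val, lt2⟩)
    have H2 := key.symm.trans H
    have hB : ∑ k : Fin (d₂ (Q.t a)),
        (dsum K M N).mat b ⟨i.val, lt1⟩
            ((finCongr (congrArg (d₁ + d₂) (P.comp (a, b) hab))) (Fin.natAdd _ k)) *
          (dsum K M N).mat a (Fin.natAdd _ k) ⟨j.val, lt2⟩ = 0 := by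
      apply Finset.sum_eq_zero
      intro k _
      rw [dsum_mat M N a]
      rw [dif_neg (by simp), dif_pos (by simpa using j.isLt), mul_zero]
    rw [hB, add_zero] at H2
    rw [← H2]
    apply Finset.sum_congr rfl
    intro k _
    have hk : k.val < d₁ (Q.s b) := by omega
    congr 1
    · rw [dsum_mat M N b, dif_pos (by simpa using i.isLt), dif_pos (by simpa using hk)]
      exact matrix_congr _ rfl (by simp)
    · rw [dsum_mat M N a, dif_pos (by simpa using k.isLt), dif_pos (by simpa using j.isLt)]
      exact matrix_congr _ rfl rfl
  · intro a b hab i j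
    have hcomp : Q.t a = Q.s b := P.comp (a, b) hab
    have hd1 : d₁ (Q.t a) = d₁ (Q.s b) := congrArg d₁ hcomp
    have hd2 : d₂ (Q.t a) = d₂ (Q.s b) := congrArg d₂ hcomp
    have lt1 : d₁ (Q.t b) + i.val < (d₁ + d₂) (Q.t b) := by
      have := i.isLt
      show d₁ (Q.t b) + i.val < d₁ (Q.t b) + d₂ (Q.t b)
      omega
    have lt2 : d₁ (Q.s a) + j.val < (d₁ + d₂) (Q.s a) := by
      have := j.isLt
      show d₁ (Q.s a) + j.val < d₁ (Q.s a) + d₂ (Q.s a)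
      omega
    have H := h a b hab ⟨d₁ (Q.t b) + i.val, lt1⟩ ⟨d₁ (Q.s a) + j.val, lt2⟩
    have key := Fin.sum_univ_add (f := fun k : Fin (d₁ (Q.t a) + d₂ (Q.t a)) =>
      (dsum K M N).mat b ⟨d₁ (Q.t b) + i.val, lt1⟩
          ((finCongr (congrArg (d₁ + d₂) (P.comp (a, b) hab))) k) *
        (dsum K M N).mat a k ⟨d₁ (Q.s a) + j.val, lt2⟩)
    have H2 := key.symm.trans H
    have hB : ∑ k : Fin (d₁ (Q.t a)),
        (dsum K M N).mat b ⟨d₁ (Q.t b) + i.val, lt1⟩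
            ((finCongr (congrArg (d₁ + d₂) (P.comp (a, b) hab))) (Fin.castAdd _ k)) *
          (dsum K M N).mat a (Fin.castAdd _ k) ⟨d₁ (Q.s a) + j.val, lt2⟩ = 0 := by
      apply Finset.sum_eq_zero
      intro k _
      have hk : k.val < d₁ (Q.s b) := by omega
      rw [dsum_mat M N b, dif_neg (by simp), dif_pos (by simpa using hk), zero_mul]
    rw [hB, zero_add] at H2
    rw [← H2]
    apply Finset.sum_congr rfl
    intro k _
    congr 1
    · rw [dsum_mat M N b, dif_neg (by simp), dif_neg (by simp; omega)]
      exact matrix_congr _ (by simp) (by simp; omega)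
    · rw [dsum_mat M N a, dif_neg (by simp), dif_neg (by simp)]
      exact matrix_congr _ (by simp) (by simp)

end ModuliPaper
set_option linter.unnecessarySimpa false
namespace ModuliPaper

variable {K : Type} [Field K] {Q : Quiv} {d : Q.V → ℕ} {P : PairRels Q}

lemma rel_rank {M : Rep K Q d} (hM : M ∈ pairModVar K P d) {u v : Q.Ar}
    (huv : (u, v) ∈ P.R) : (M.mat v).rank + (M.mat u).rank ≤ d (Q.t u) := by
  have h0 := (mem_pairModVar_iff P M).mp hM u v huv
  have hsub : (M.mat v).submatrix id ⇑(finCongr (congrArg d (P.comp (u, v) huv)))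
      = Matrix.reindex (Equiv.refl _) (finCongr (congrArg d (P.comp (u, v) huv))).symm
        (M.mat v) := rfl
  have hrk : ((M.mat v).submatrix id
      ⇑(finCongr (congrArg d (P.comp (u, v) huv)))).rank = (M.mat v).rank := by
    rw [hsub, rank_reindex_rect]
  calc (M.mat v).rank + (M.mat u).rank
      = ((M.mat v).submatrix id ⇑(finCongr (congrArg d (P.comp (u, v) huv)))).rank
        + (M.mat u).rank := by rw [hrk]
    _ ≤ Fintype.card (Fin (d (Q.t u))) := Matrix.rank_add_rank_le_card_of_mul_eq_zero h0
    _ = d (Q.t u) := Fintype.card_fin _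

lemma local_bound (hg : P.IsGentle) {M : Rep K Q d} (hM : M ∈ pairModVar K P d) (x : Q.V) :
    (∑ b ∈ Finset.univ.filter (fun b => Q.t b = x), (M.mat b).rank) +
      (∑ a ∈ Finset.univ.filter (fun a => Q.s a = x), (M.mat a).rank) ≤ 2 * d x := by
  classical
  set Fi := Finset.univ.filter (fun b => Q.t b = x) with hFi
  set Fo := Finset.univ.filter (fun a => Q.s a = x) with hFo
  have memFi : ∀ u ∈ Fi, Q.t u = x := fun u hu => (Finset.mem_filter.mp hu).2
  have memFo : ∀ u ∈ Fo, Q.s u = x := fun u hu => (Finset.mem_filter.mp hu).2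
  have hin : ∀ u ∈ Fi, (M.mat u).rank ≤ d x := by
    intro u hu
    calc (M.mat u).rank ≤ Fintype.card (Fin (d (Q.t u))) := Matrix.rank_le_card_height _
      _ = d x := by rw [Fintype.card_fin, memFi u hu]
  have hout : ∀ u ∈ Fo, (M.mat u).rank ≤ d x := by
    intro u hu
    calc (M.mat u).rank ≤ Fintype.card (Fin (d (Q.s u))) := Matrix.rank_le_card_width _
      _ = d x := by rw [Fintype.card_fin, memFo u hu]
  have hrel : ∀ u ∈ Fi, ∀ v, (u, v) ∈ P.R → (M.mat v).rank + (M.mat u).rank ≤ d x := by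
    intro u hu v huv
    have h := rel_rank hM huv
    have hdx : d (Q.t u) = d x := congrArg d (memFi u hu)
    omega
  have hFi2 : Fi.card ≤ 2 := by
    by_contra hc
    have hc2 : 2 < Fi.card := by omega
    obtain ⟨a, ha, b, hb, c, hc', hab, hac, hbc⟩ := Finset.two_lt_card.mp hc2
    rcases (hg.1 x).2 a (memFi a ha) b (memFi b hb) c (memFi c hc') with h | h | h <;>
      [exact hab h; exact hac h; exact hbc h]
  have hFo2 : Fo.card ≤ 2 := by
    by_contra hc
    have hc2 : 2 < Fo.card := by omega
    obtain ⟨a, ha, b, hb, c, hc', hab, hac, hbc⟩ := Finset.two_lt_card.mp hc2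
    rcases (hg.1 x).1 a (memFo a ha) b (memFo b hb) c (memFo c hc') with h | h | h <;>
      [exact hab h; exact hac h; exact hbc h]
  -- the matched relation for an in-arrow against two distinct out-arrows
  have match1 : ∀ u ∈ Fi, ∀ v1 ∈ Fo, ∀ v2 ∈ Fo, v1 ≠ v2 →
      (u, v1) ∈ P.R ∨ (u, v2) ∈ P.R := by
    intro u hu v1 hv1 v2 hv2 hne
    by_contra hcon
    push_neg at hcon
    have h1 : Q.t u = Q.s v1 := by rw [memFi u hu, memFo v1 hv1]
    have h2 : Q.t u = Q.s v2 := by rw [memFi u hu, memFo v2 hv2]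
    exact hne ((hg.2.1 u).1 v1 ⟨h1, hcon.1⟩ v2 ⟨h2, hcon.2⟩)
  have match2 : ∀ v ∈ Fo, ∀ u1 ∈ Fi, ∀ u2 ∈ Fi, u1 ≠ u2 →
      (u1, v) ∈ P.R ∨ (u2, v) ∈ P.R := by
    intro v hv u1 hu1 u2 hu2 hne
    by_contra hcon
    push_neg at hcon
    have h1 : Q.t u1 = Q.s v := by rw [memFi u1 hu1, memFo v hv]
    have h2 : Q.t u2 = Q.s v := by rw [memFi u2 hu2, memFo v hv]
    exact hne ((hg.2.1 v).2 u1 ⟨h1, hcon.1⟩ u2 ⟨h2, hcon.2⟩)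
  have hcases : Fi.card = 0 ∨ Fi.card = 1 ∨ Fi.card = 2 := by omega
  have hcaseso : Fo.card = 0 ∨ Fo.card = 1 ∨ Fo.card = 2 := by omega
  have hsumFi : ∑ b ∈ Fi, (M.mat b).rank ≤ Fi.card * d x := by
    calc ∑ b ∈ Fi, (M.mat b).rank ≤ Fi.card • d x := Finset.sum_le_card_nsmul _ _ _ hin
      _ = Fi.card * d x := nsmul_eq_mul _ _
  have hsumFo : ∑ a ∈ Fo, (M.mat a).rank ≤ Fo.card * d x := by
    calc ∑ a ∈ Fo, (M.mat a).rank ≤ Fo.card • d x := Finset.sum_le_card_nsmul _ _ _ hout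
      _ = Fo.card * d x := nsmul_eq_mul _ _
  rcases hcases with h1 | h1 | h1 <;> rcases hcaseso with h2 | h2 | h2 <;>
    rw [h1] at hsumFi <;> rw [h2] at hsumFo
  -- easy cases where card Fi + card Fo ≤ 2
  · omega
  · omega
  · omega
  · omega
  · omega
  · -- Fi = {u}, Fo = {v1, v2}
    obtain ⟨u, hu⟩ := Finset.card_eq_one.mp h1
    obtain ⟨v1, v2, hne, hv⟩ := Finset.card_eq_two.mp h2
    have hu1 : u ∈ Fi := by rw [hu]; exact Finset.mem_singleton_self u
    have hv1 : v1 ∈ Fo := by rw [hv]; exact Finset.mem_insert_self _ _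
    have hv2 : v2 ∈ Fo := by rw [hv]; exact Finset.mem_insert_of_mem (Finset.mem_singleton_self _)
    rw [hu, hv, Finset.sum_singleton, Finset.sum_pair hne]
    rcases match1 u hu1 v1 hv1 v2 hv2 hne with hr | hr
    · have := hrel u hu1 v1 hr
      have := hout v2 hv2
      omega
    · have := hrel u hu1 v2 hr
      have := hout v1 hv1
      omega
  · omega
  · -- Fi = {u1, u2}, Fo = {v}
    obtain ⟨u1, u2, hne, hu⟩ := Finset.card_eq_two.mp h1
    obtain ⟨v, hv⟩ := Finset.card_eq_one.mp h2
    have hu1 : u1 ∈ Fi := by rw [hu]; exact Finset.mem_insert_self _ _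
    have hu2 : u2 ∈ Fi := by rw [hu]; exact Finset.mem_insert_of_mem (Finset.mem_singleton_self _)
    have hv1 : v ∈ Fo := by rw [hv]; exact Finset.mem_singleton_self v
    rw [hu, hv, Finset.sum_singleton, Finset.sum_pair hne]
    rcases match2 v hv1 u1 hu1 u2 hu2 hne with hr | hr
    · have := hrel u1 hu1 v hr
      have := hin u2 hu2
      omega
    · have := hrel u2 hu2 v hr
      have := hin u1 hu1
      omega
  · -- Fi = {u1, u2}, Fo = {v1, v2}
    obtain ⟨u1, u2, hneu, hu⟩ := Finset.card_eq_two.mp h1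
    obtain ⟨v1, v2, hnev, hv⟩ := Finset.card_eq_two.mp h2
    have hu1 : u1 ∈ Fi := by rw [hu]; exact Finset.mem_insert_self _ _
    have hu2 : u2 ∈ Fi := by rw [hu]; exact Finset.mem_insert_of_mem (Finset.mem_singleton_self _)
    have hv1 : v1 ∈ Fo := by rw [hv]; exact Finset.mem_insert_self _ _
    have hv2 : v2 ∈ Fo := by rw [hv]; exact Finset.mem_insert_of_mem (Finset.mem_singleton_self _)
    obtain ⟨w1, hw1mem, hw1⟩ : ∃ w, (w = v1 ∨ w = v2) ∧ (u1, w) ∈ P.R := by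
      rcases match1 u1 hu1 v1 hv1 v2 hv2 hnev with hr | hr
      · exact ⟨v1, Or.inl rfl, hr⟩
      · exact ⟨v2, Or.inr rfl, hr⟩
    obtain ⟨w2, hw2mem, hw2⟩ : ∃ w, (w = v1 ∨ w = v2) ∧ (u2, w) ∈ P.R := by
      rcases match1 u2 hu2 v1 hv1 v2 hv2 hnev with hr | hr
      · exact ⟨v1, Or.inl rfl, hr⟩
      · exact ⟨v2, Or.inr rfl, hr⟩
    have hwne : w1 ≠ w2 := by
      intro hww
      exact hneu ((hg.2.2 w1).2 u1 hw1 u2 (by rw [hww]; exact hw2))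
    have hb1 := hrel u1 hu1 w1 hw1
    have hb2 := hrel u2 hu2 w2 hw2
    have hsum : (M.mat v1).rank + (M.mat v2).rank = (M.mat w1).rank + (M.mat w2).rank := by
      rcases hw1mem with rfl | rfl <;> rcases hw2mem with rfl | rfl <;>
        first | omega | exact absurd rfl hwne
    rw [hu, hv, Finset.sum_pair hneu, Finset.sum_pair hnev]
    omega

lemma rksum_le_dimsum (hg : P.IsGentle) {M : Rep K Q d} (hM : M ∈ pairModVar K P d) :
    rksum M ≤ dimsum d := by
  classical
  have h1 : ∑ x : Q.V, ∑ b ∈ Finset.univ.filter (fun b => Q.t b = x), (M.mat b).rank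
      = rksum M := Finset.sum_fiberwise _ _ _
  have h2 : ∑ x : Q.V, ∑ a ∈ Finset.univ.filter (fun a => Q.s a = x), (M.mat a).rank
      = rksum M := Finset.sum_fiberwise _ _ _
  have h3 : ∑ x : Q.V,
      ((∑ b ∈ Finset.univ.filter (fun b => Q.t b = x), (M.mat b).rank) +
        (∑ a ∈ Finset.univ.filter (fun a => Q.s a = x), (M.mat a).rank)) ≤
      ∑ x : Q.V, 2 * d x :=
    Finset.sum_le_sum fun x _ => local_bound hg hM x
  rw [Finset.sum_add_distrib, h1, h2] at h3
  have h4 : ∑ x : Q.V, 2 * d x = 2 * dimsum d := by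
    rw [← Finset.mul_sum]; rfl
  omega

end ModuliPaper
set_option linter.unnecessarySimpa false
namespace ModuliPaper

variable {K : Type} [Field K] {Q : Quiv} {d d' d'' d₁ d₂ : Q.V → ℕ}

lemma recast_eq_self (h : d = d) (X : Rep K Q d) : recast K h X = X := by
  rw [Subsingleton.elim h (rfl : d = d)]
  rfl

lemma recast_trans (h1 : d = d') (h2 : d' = d'') (X : Rep K Q d) :
    recast K h2 (recast K h1 X) = recast K (h1.trans h2) X := by
  subst h1; subst h2; rfl

lemma recast_symm_eq {h : d = d'} {X : Rep K Q d} {Y : Rep K Q d'}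
    (hXY : recast K h X = Y) : X = recast K h.symm Y := by
  subst h; subst hXY; rw [recast_eq_self, recast_eq_self]

lemma recast_dsum {d₁' d₂' : Q.V → ℕ} (h1 : d₁ = d₁') (h2 : d₂ = d₂')
    (X : Rep K Q d₁) (Y : Rep K Q d₂) (h : d₁ + d₂ = d₁' + d₂') :
    recast K h (dsum K X Y) = dsum K (recast K h1 X) (recast K h2 Y) := by
  subst h1; subst h2; rw [recast_eq_self, recast_eq_self, recast_eq_self]

lemma sumDim_append (L₁ L₂ : List (Σ e : Q.V → ℕ, Rep K Q e)) :
    sumDim K (L₁ ++ L₂) = sumDim K L₁ + sumDim K L₂ := by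
  induction L₁ with
  | nil => exact (zero_add _).symm
  | cons x L ih =>
    show x.1 + sumDim K (L ++ L₂) = (x.1 + sumDim K L) + sumDim K L₂
    rw [ih, add_assoc]

lemma dsum_assoc {e₁ e₂ e₃ : Q.V → ℕ} (A : Rep K Q e₁) (B : Rep K Q e₂) (C : Rep K Q e₃)
    (h : e₁ + (e₂ + e₃) = e₁ + e₂ + e₃) :
    recast K h (dsum K A (dsum K B C)) = dsum K (dsum K A B) C := by
  apply rep_ext; funext a
  ext i j
  have et1 : (e₂ + e₃) (Q.t a) = e₂ (Q.t a) + e₃ (Q.t a) := rfl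
  have es1 : (e₂ + e₃) (Q.s a) = e₂ (Q.s a) + e₃ (Q.s a) := rfl
  have et2 : (e₁ + e₂) (Q.t a) = e₁ (Q.t a) + e₂ (Q.t a) := rfl
  have es2 : (e₁ + e₂) (Q.s a) = e₁ (Q.s a) + e₂ (Q.s a) := rfl
  have hit := i.isLt
  have hjt := j.isLt
  simp only [recast_mat, dsum_mat, Fin.val_mk, Pi.add_apply] at *
  split_ifs <;>
    first
      | rfl
      | (exfalso; omega)
      | (exfalso; simp only [Fin.val_mk, Pi.add_apply] at *; omega)
      | (exact matrix_congr _ (by simp only [Fin.val_mk, Pi.add_apply] at *; omega)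
          (by simp only [Fin.val_mk, Pi.add_apply] at *; omega))

lemma recast_proof_irrel (h h' : d = d') (X : Rep K Q d) : recast K h X = recast K h' X := by
  rw [Subsingleton.elim h h']

lemma dsum_recast_right {d₂' : Q.V → ℕ} (h2 : d₂ = d₂') (X : Rep K Q d₁) (Y : Rep K Q d₂)
    (h : d₁ + d₂ = d₁ + d₂') : recast K h (dsum K X Y) = dsum K X (recast K h2 Y) := by
  subst h2; rw [recast_eq_self, recast_eq_self]

lemma listSum_append (L₁ L₂ : List (Σ e : Q.V → ℕ, Rep K Q e)) :
    recast K (sumDim_append L₁ L₂) (listSum K (L₁ ++ L₂))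
      = dsum K (listSum K L₁) (listSum K L₂) := by
  induction L₁ with
  | nil =>
    apply rep_ext; funext a
    ext i j
    have h5 : sumDim K ([] : List (Σ e : Q.V → ℕ, Rep K Q e)) (Q.t a) = 0 := rfl
    have h6 : sumDim K ([] : List (Σ e : Q.V → ℕ, Rep K Q e)) (Q.s a) = 0 := rfl
    have h3 : (sumDim K ([] : List (Σ e : Q.V → ℕ, Rep K Q e)) + sumDim K L₂) (Q.t a)
        = 0 + sumDim K L₂ (Q.t a) := rfl
    have h4 : (sumDim K ([] : List (Σ e : Q.V → ℕ, Rep K Q e)) + sumDim K L₂) (Q.s a)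
        = 0 + sumDim K L₂ (Q.s a) := rfl
    have h1 : sumDim K ([] ++ L₂) (Q.t a) = sumDim K L₂ (Q.t a) := rfl
    have h2 : sumDim K ([] ++ L₂) (Q.s a) = sumDim K L₂ (Q.s a) := rfl
    have hit := i.isLt
    have hjt := j.isLt
    rw [recast_mat, dsum_mat, dif_neg (by omega), dif_neg (by omega)]
    exact matrix_congr _ (by simp only [Fin.val_mk]; omega) (by simp only [Fin.val_mk]; omega)
  | cons x L ih =>
    have h2 := sumDim_append L L₂
    have h' : x.1 + sumDim K (L ++ L₂) = x.1 + (sumDim K L + sumDim K L₂) := by rw [h2]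
    have H' : x.1 + (sumDim K L + sumDim K L₂) = sumDim K (x :: L) + sumDim K L₂ :=
      (add_assoc _ _ _).symm
    show recast K (sumDim_append (x :: L) L₂) (dsum K x.2 (listSum K (L ++ L₂)))
        = dsum K (dsum K x.2 (listSum K L)) (listSum K L₂)
    calc recast K (sumDim_append (x :: L) L₂) (dsum K x.2 (listSum K (L ++ L₂)))
        = recast K (h'.trans H') (dsum K x.2 (listSum K (L ++ L₂))) :=
          recast_proof_irrel _ _ _
      _ = recast K H' (recast K h' (dsum K x.2 (listSum K (L ++ L₂)))) :=
          (recast_trans h' H' _).symm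
      _ = recast K H' (dsum K x.2 (recast K h2 (listSum K (L ++ L₂)))) := by
          rw [dsum_recast_right h2]
      _ = recast K H' (dsum K x.2 (dsum K (listSum K L) (listSum K L₂))) := by rw [ih]
      _ = (show Rep K Q (sumDim K (x :: L) + sumDim K L₂) from
          dsum K (dsum K x.2 (listSum K L)) (listSum K L₂)) := dsum_assoc _ _ _ _

/-- block-diagonal element of `GL(d₁+d₂)` -/
noncomputable def blockGL {m n : ℕ} (u : Matrix.GeneralLinearGroup (Fin m) K)
    (v : Matrix.GeneralLinearGroup (Fin n) K) : Matrix.GeneralLinearGroup (Fin (m + n)) K where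
  val := Matrix.reindex finSumFinEquiv finSumFinEquiv (Matrix.fromBlocks u.val 0 0 v.val)
  inv := Matrix.reindex finSumFinEquiv finSumFinEquiv (Matrix.fromBlocks (u⁻¹).val 0 0 (v⁻¹).val)
  val_inv := by
    simp only [Matrix.reindex_apply, Matrix.submatrix_mul_equiv, Matrix.fromBlocks_multiply,
      Matrix.mul_zero, Matrix.zero_mul, add_zero, zero_add, Units.mul_inv,
      Matrix.fromBlocks_one, Matrix.submatrix_one_equiv]
  inv_val := by
    simp only [Matrix.reindex_apply, Matrix.submatrix_mul_equiv, Matrix.fromBlocks_multiply,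
      Matrix.mul_zero, Matrix.zero_mul, add_zero, zero_add, Units.inv_mul,
      Matrix.fromBlocks_one, Matrix.submatrix_one_equiv]

lemma glAct_dsum (g₁ : ∀ x : Q.V, Matrix.GeneralLinearGroup (Fin (d₁ x)) K)
    (g₂ : ∀ x : Q.V, Matrix.GeneralLinearGroup (Fin (d₂ x)) K)
    (M : Rep K Q d₁) (N : Rep K Q d₂) :
    glAct K (fun x => blockGL (g₁ x) (g₂ x)) (dsum K M N)
      = dsum K (glAct K g₁ M) (glAct K g₂ N) := by
  apply rep_ext; funext a
  have e1 : (glAct K (fun x => blockGL (g₁ x) (g₂ x)) (dsum K M N)).mat a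
      = (blockGL (g₁ (Q.t a)) (g₂ (Q.t a))).val *
        (Matrix.reindex finSumFinEquiv finSumFinEquiv
          (Matrix.fromBlocks (M.mat a) 0 0 (N.mat a))) *
        ((blockGL (g₁ (Q.s a)) (g₂ (Q.s a)))⁻¹).val := rfl
  have e2 : (blockGL (g₁ (Q.t a)) (g₂ (Q.t a))).val
      = Matrix.reindex finSumFinEquiv finSumFinEquiv
        (Matrix.fromBlocks (g₁ (Q.t a)).val 0 0 (g₂ (Q.t a)).val) := rfl
  have e3 : ((blockGL (g₁ (Q.s a)) (g₂ (Q.s a)))⁻¹).val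
      = Matrix.reindex finSumFinEquiv finSumFinEquiv
        (Matrix.fromBlocks ((g₁ (Q.s a))⁻¹).val 0 0 ((g₂ (Q.s a))⁻¹).val) := rfl
  have e4 : (dsum K (glAct K g₁ M) (glAct K g₂ N)).mat a
      = Matrix.reindex finSumFinEquiv finSumFinEquiv
        (Matrix.fromBlocks ((g₁ (Q.t a)).val * M.mat a * ((g₁ (Q.s a))⁻¹).val) 0 0
          ((g₂ (Q.t a)).val * N.mat a * ((g₂ (Q.s a))⁻¹).val)) := rfl
  rw [e1, e2, e3, e4]
  simp only [Matrix.reindex_apply, Matrix.submatrix_mul_equiv]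
  congr 1
  simp [Matrix.fromBlocks_multiply]

lemma iso_dsum {M₁ N₁ : Rep K Q d₁} {M₂ N₂ : Rep K Q d₂}
    (h1 : Iso K M₁ N₁) (h2 : Iso K M₂ N₂) : Iso K (dsum K M₁ M₂) (dsum K N₁ N₂) := by
  obtain ⟨g₁, rfl⟩ := h1
  obtain ⟨g₂, rfl⟩ := h2
  exact ⟨fun x => blockGL (g₁ x) (g₂ x), glAct_dsum g₁ g₂ M₁ M₂⟩

lemma isSumOfBands_dsum {M₁ : Rep K Q d₁} {M₂ : Rep K Q d₂}
    (h1 : IsSumOfBands K M₁) (h2 : IsSumOfBands K M₂) : IsSumOfBands K (dsum K M₁ M₂) := by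
  obtain ⟨L₁, hb1, hd1, hi1⟩ := h1
  obtain ⟨L₂, hb2, hd2, hi2⟩ := h2
  refine ⟨L₁ ++ L₂, ?_, (sumDim_append L₁ L₂).trans (by rw [hd1, hd2]), ?_⟩
  · intro p hp
    rcases List.mem_append.mp hp with h | h
    · exact hb1 p h
    · exact hb2 p h
  · rw [← recast_trans (sumDim_append L₁ L₂) (by rw [hd1, hd2]), listSum_append,
      recast_dsum hd1 hd2]
    exact iso_dsum hi1 hi2

end ModuliPaper
set_option linter.unnecessarySimpa false
namespace ModuliPaper

variable {K : Type} [Field K] {Q : Quiv} {d : Q.V → ℕ} {P : PairRels Q}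

lemma rksum_listSum (L : List (Σ e : Q.V → ℕ, Rep K Q e)) :
    rksum (listSum K L) = (L.map (fun p => rksum p.2)).sum := by
  induction L with
  | nil =>
    show rksum (⟨fun _ => 0⟩ : Rep K Q (sumDim K [])) = 0
    unfold rksum
    apply Finset.sum_eq_zero
    intro a _
    have h := Matrix.rank_le_card_height ((⟨fun _ => 0⟩ : Rep K Q (sumDim K [])).mat a)
    simpa using h
  | cons x L ih =>
    show rksum (dsum K x.2 (listSum K L)) = _
    rw [rksum_dsum, ih, List.map_cons, List.sum_cons]

lemma dimsum_sumDim (L : List (Σ e : Q.V → ℕ, Rep K Q e)) :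
    dimsum (sumDim K L) = (L.map (fun p => dimsum p.1)).sum := by
  induction L with
  | nil =>
    show dimsum (0 : Q.V → ℕ) = 0
    rw [dimsum_eq_zero_iff]
  | cons x L ih =>
    show dimsum (x.1 + sumDim K L) = _
    rw [dimsum_add, ih, List.map_cons, List.sum_cons]

lemma rksum_of_isSumOfBands {M : Rep K Q d} (h : IsSumOfBands K M) : rksum M = dimsum d := by
  obtain ⟨L, hb, hsd, hiso⟩ := h
  have e1 : rksum (recast K hsd (listSum K L)) = rksum M := rksum_iso hiso
  rw [recast_rksum, rksum_listSum] at e1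
  rw [← e1, ← recast_dimsum hsd, dimsum_sumDim]
  congr 1
  apply List.map_congr_left
  intro p hp
  exact ((hb p hp).2).symm

theorem isSumOfBands_of_rksum_eq_aux (hg : P.IsGentle) : ∀ (n : ℕ) (d : Q.V → ℕ)
    (M : Rep K Q d), M ∈ pairModVar K P d → dimsum d = n → rksum M = dimsum d →
    IsSumOfBands K M := by
  intro n
  induction n using Nat.strong_induction_on with
  | _ n IH =>
    intro d M hM hn heq
    by_cases hd0 : d = 0
    · subst hd0
      refine ⟨[], fun p hp => absurd hp List.not_mem_nil, rfl, ?_⟩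
      have hz : (listSum K ([] : List (Σ e : Q.V → ℕ, Rep K Q e))) = M := by
        apply rep_ext; funext a
        ext i j
        exact i.elim0
      exact ⟨1, (glAct_one _).trans hz⟩
    · by_cases hI : Indec K M
      · refine ⟨[⟨d, M⟩], ?_, rfl, ?_⟩
        · intro p hp
          rw [List.mem_singleton] at hp
          subst hp
          exact ⟨hI, heq.symm⟩
        · have hz : listSum K [(⟨d, M⟩ : Σ e : Q.V → ℕ, Rep K Q e)] = M := by
            apply rep_ext; funext a
            ext i j
            show (dsum K M (listSum K [])).mat a i j = M.mat a i j
            have hd1 : (d + sumDim K ([] : List (Σ e : Q.V → ℕ, Rep K Q e))) (Q.t a)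
                = d (Q.t a) + 0 := rfl
            have hd2 : (d + sumDim K ([] : List (Σ e : Q.V → ℕ, Rep K Q e))) (Q.s a)
                = d (Q.s a) + 0 := rfl
            have hs1 : sumDim K [(⟨d, M⟩ : Σ e : Q.V → ℕ, Rep K Q e)] (Q.t a)
                = d (Q.t a) + 0 := rfl
            have hs2 : sumDim K [(⟨d, M⟩ : Σ e : Q.V → ℕ, Rep K Q e)] (Q.s a)
                = d (Q.s a) + 0 := rfl
            have hit := i.isLt
            have hjt := j.isLt
            refine (dsum_mat (M := M) (N := listSum K []) (a := a) (i := i) (j := j)).trans ?_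
            rw [dif_pos (by omega), dif_pos (by omega)]
            exact matrix_congr _ (by simp only [Fin.val_mk]) (by simp only [Fin.val_mk])
          exact ⟨1, (glAct_one _).trans hz⟩
      · rw [Indec] at hI
        push_neg at hI
        obtain ⟨d₁, d₂, M₁, M₂, hsum, hd₁, hd₂, hiso⟩ := hI hd0
        have h1 : Iso K M (recast K hsum (dsum K M₁ M₂)) := iso_symm hiso
        have h2 : recast K hsum (dsum K M₁ M₂) ∈ pairModVar K P d :=
          iso_mem_pairModVar P h1 hM
        have h3 : dsum K M₁ M₂ ∈ pairModVar K P (d₁ + d₂) := by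
          have h4 := recast_mem_pairModVar hsum.symm _ P h2
          rwa [recast_trans, recast_eq_self] at h4
        obtain ⟨hm1, hm2⟩ := dsum_mem_pairModVar P h3
        have hrk : rksum (dsum K M₁ M₂) = dimsum (d₁ + d₂) := by
          have e1 : rksum M = rksum (recast K hsum (dsum K M₁ M₂)) := rksum_iso h1
          rw [recast_rksum] at e1
          rw [← e1, heq, ← hsum]
        rw [rksum_dsum, dimsum_add] at hrk
        have hb1 : rksum M₁ ≤ dimsum d₁ := rksum_le_dimsum hg hm1
        have hb2 : rksum M₂ ≤ dimsum d₂ := rksum_le_dimsum hg hm2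
        have hz1 : dimsum d₁ ≠ 0 := fun h => hd₁ (dimsum_eq_zero_iff.mp h)
        have hz2 : dimsum d₂ ≠ 0 := fun h => hd₂ (dimsum_eq_zero_iff.mp h)
        have htot : dimsum d₁ + dimsum d₂ = n := by
          rw [← dimsum_add, hsum, hn]
        have s1 := IH (dimsum d₁) (by omega) d₁ M₁ hm1 rfl (by omega)
        have s2 := IH (dimsum d₂) (by omega) d₂ M₂ hm2 rfl (by omega)
        exact isSumOfBands_iso hiso (isSumOfBands_recast hsum (isSumOfBands_dsum s1 s2))

lemma isSumOfBands_of_rksum_eq (hg : P.IsGentle) {M : Rep K Q d}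
    (hM : M ∈ pairModVar K P d) (heq : rksum M = dimsum d) : IsSumOfBands K M :=
  isSumOfBands_of_rksum_eq_aux hg (dimsum d) d M hM rfl heq

end ModuliPaper
set_option linter.unnecessarySimpa false
namespace ModuliPaper
open scoped Matrix

variable {K : Type} [Field K]

lemma submatrix_via_mul {m n r s : ℕ} (A : Matrix (Fin m) (Fin n) K)
    (f : Fin r → Fin m) (g : Fin s → Fin n) :
    A.submatrix f g =
      (Matrix.of fun (i : Fin r) (k : Fin m) => if k = f i then (1 : K) else 0) * A *
      (Matrix.of fun (l : Fin n) (j : Fin s) => if l = g j then (1 : K) else 0) := by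
  ext i j
  simp [Matrix.mul_apply, Finset.sum_ite_eq, ite_mul, Finset.mul_sum, Finset.sum_ite_eq']

lemma rank_submatrix_le' {m n r s : ℕ} (A : Matrix (Fin m) (Fin n) K)
    (f : Fin r → Fin m) (g : Fin s → Fin n) : (A.submatrix f g).rank ≤ A.rank := by
  rw [submatrix_via_mul]
  exact le_trans (Matrix.rank_mul_le_left _ _) (Matrix.rank_mul_le_right _ _)

lemma exists_indep_cols {m n r : ℕ} (A : Matrix (Fin m) (Fin n) K) (hr : r ≤ A.rank) :
    ∃ g : Fin r → Fin n, Function.Injective g ∧ LinearIndependent K (fun i => Aᵀ (g i)) := by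
  classical
  obtain ⟨s, hst, hspan, hind⟩ := exists_linearIndependent K (Set.range Aᵀ)
  have hsfin : s.Finite := Set.Finite.subset (Set.finite_range _) hst
  haveI : Fintype s := hsfin.fintype
  have hcard : r ≤ Fintype.card s := by
    have h1 : A.rank = Module.finrank K (Submodule.span K (Set.range Aᵀ)) :=
      Matrix.rank_eq_finrank_span_cols A
    have h2 : Module.finrank K (Submodule.span K s) = s.toFinset.card :=
      finrank_span_set_eq_card hind
    rw [h1, ← hspan, h2, Set.toFinset_card] at hr
    exact hr
  have hcard' : Fintype.card (Fin r) ≤ Fintype.card s := by simpa using hcard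
  obtain ⟨e⟩ := Function.Embedding.nonempty_of_card_le hcard'
  have hgex : ∀ i : Fin r, ∃ j : Fin n, Aᵀ j = ((e i) : Fin m → K) := fun i => hst (e i).2
  choose g hg using hgex
  refine ⟨g, ?_, ?_⟩
  · intro i j hij
    apply e.injective
    apply Subtype.ext
    rw [← hg i, ← hg j, hij]
  · have : (fun i => Aᵀ (g i)) = (fun i => ((e i) : Fin m → K)) := funext fun i => hg i
    rw [this]
    exact hind.comp e e.injective

lemma exists_minor_of_rank_ge {m n r : ℕ} (A : Matrix (Fin m) (Fin n) K) (hr : r ≤ A.rank) :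
    ∃ (f : Fin r → Fin m) (g : Fin r → Fin n), (A.submatrix f g).det ≠ 0 := by
  obtain ⟨g, hginj, hgind⟩ := exists_indep_cols A hr
  set B := A.submatrix id g with hB
  have hBt : Bᵀ = fun i => Aᵀ (g i) := by
    funext i k
    rfl
  have hBrank : B.rank = r := by
    rw [Matrix.rank_eq_finrank_span_cols, show B.col = Bᵀ from rfl, hBt]
    rw [finrank_span_eq_card hgind]
    simp
  have hBtrank : r ≤ Bᵀ.rank := by rw [Matrix.rank_transpose, hBrank]
  obtain ⟨f, hfinj, hfind⟩ := exists_indep_cols Bᵀ hBtrank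
  refine ⟨f, g, ?_⟩
  have hCrows : LinearIndependent K (fun i => (A.submatrix f g) i) := by
    have : (fun i => (A.submatrix f g) i) = (fun i => Bᵀᵀ (f i)) := by
      funext i
      rfl
    rw [this]
    exact hfind
  have hunit : IsUnit (A.submatrix f g) := Matrix.linearIndependent_rows_iff_isUnit.mp hCrows
  exact ((Matrix.isUnit_iff_isUnit_det _).mp hunit).ne_zero

lemma rank_ge_iff_minor {m n r : ℕ} (A : Matrix (Fin m) (Fin n) K) :
    r ≤ A.rank ↔ ∃ (f : Fin r → Fin m) (g : Fin r → Fin n), (A.submatrix f g).det ≠ 0 := by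
  constructor
  · exact exists_minor_of_rank_ge A
  · rintro ⟨f, g, hdet⟩
    have hunit : IsUnit (A.submatrix f g) :=
      (Matrix.isUnit_iff_isUnit_det _).mpr (isUnit_iff_ne_zero.mpr hdet)
    have := Matrix.rank_of_isUnit _ hunit
    calc r = Fintype.card (Fin r) := by simp
      _ = (A.submatrix f g).rank := this.symm
      _ ≤ A.rank := rank_submatrix_le' A f g

lemma isOpen_rank_ge {Q : Quiv} (d : Q.V → ℕ) (rk : Q.Ar → ℕ) :
    IsOpen {M : Rep K Q d | ∀ a, rk a ≤ (M.mat a).rank} := by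
  have hI : {M : Rep K Q d | ∀ a, rk a ≤ (M.mat a).rank}
      = ⋂ a : Q.Ar, {M : Rep K Q d | rk a ≤ (M.mat a).rank} := by
    ext M; simp
  rw [hI]
  apply isOpen_iInter_of_finite
  intro a
  have hU : {M : Rep K Q d | rk a ≤ (M.mat a).rank}
      = ⋃ (f : Fin (rk a) → Fin (d (Q.t a))), ⋃ (g : Fin (rk a) → Fin (d (Q.s a))),
          {M : Rep K Q d | (((M.mat a).submatrix f g).det ≠ 0)} := by
    ext M
    simp only [Set.mem_setOf_eq, Set.mem_iUnion]
    exact rank_ge_iff_minor (M.mat a)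
  rw [hU]
  apply isOpen_iUnion
  intro f
  apply isOpen_iUnion
  intro g
  have hset : {M : Rep K Q d | (((M.mat a).submatrix f g).det ≠ 0)}
      = Rep.coords K ⁻¹' {x : AffSp K (CoordIdx Q d) |
          MvPolynomial.eval x ((Matrix.of fun i j =>
            (MvPolynomial.X ⟨a, (f i, g j)⟩ : MvPolynomial (CoordIdx Q d) K)).det) ≠ 0} := by
    ext M
    simp only [Set.mem_setOf_eq, Set.mem_preimage]
    have heval : MvPolynomial.eval (Rep.coords K M) ((Matrix.of fun i j =>
        (MvPolynomial.X ⟨a, (f i, g j)⟩ : MvPolynomial (CoordIdx Q d) K)).det)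
        = ((M.mat a).submatrix f g).det := by
      rw [RingHom.map_det]
      congr 1
      ext i j
      simp [Rep.coords]; exact MvPolynomial.eval_X _
    rw [heval]
  rw [hset]
  rw [isOpen_induced_iff]
  exact ⟨_, TopologicalSpace.isOpen_generateFrom_of_mem ⟨_, rfl⟩, rfl⟩

end ModuliPaper

namespace ModuliPaper

/-- Observation 4.3.  Let `A = KQ/I` be an acyclic gentle
algebra and `C ⊆ mod(A,d)` an irreducible component.  Then `C` is regular (its
generic module is a direct sum of band modules) if and only if `C` contains a
module which is a direct sum of band modules.  Moreover, if `C` contains a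
module which is a direct sum of band modules, then every module in the open
subset `U = {M ∈ C : rank M(a) is maximal on C for every arrow a}` is a direct
sum of band modules. -/
theorem regular_component_iff_contains_sum_of_bands
    (K : Type) [Field K] [IsAlgClosed K] [CharZero K]
    (Q : Quiv) (P : PairRels Q) (hgentle : P.IsGentle) (hacyclic : Q.IsAcyclic)
    (d : Q.V → ℕ) (C : Set (Rep K Q d))
    (hC : IsIrrComp K (pairModVar K P d) C) :
    (IsGenericallyBands K C ↔ ∃ M ∈ C, IsSumOfBands K M) ∧
    (∀ M₀ ∈ C, IsSumOfBands K M₀ →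
      ∀ M ∈ C, (∀ a : Q.Ar, (M.mat a).rank = sSup {r : ℕ | ∃ X ∈ C, (X.mat a).rank = r}) →
        IsSumOfBands K M) := by
  constructor
  · constructor
    · rintro ⟨U, hUopen, ⟨M, hMU, hMC⟩, hall⟩
      exact ⟨M, hMC, hall M ⟨hMU, hMC⟩⟩
    · rintro ⟨M₀, hM₀C, hM₀⟩
      refine ⟨{M | ∀ a, (M₀.mat a).rank ≤ (M.mat a).rank}, isOpen_rank_ge d _,
        ⟨M₀, ⟨fun a => le_rfl, hM₀C⟩⟩, ?_⟩
      rintro M ⟨hMU, hMC⟩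
      have hMp : M ∈ pairModVar K P d := hC.1 hMC
      have h0 : rksum M₀ = dimsum d := rksum_of_isSumOfBands hM₀
      have hge : dimsum d ≤ rksum M := by
        rw [← h0]
        exact Finset.sum_le_sum fun a _ => hMU a
      have hle := rksum_le_dimsum hgentle hMp
      exact isSumOfBands_of_rksum_eq hgentle hMp (le_antisymm hle hge)
  · intro M₀ hM₀C hM₀ M hMC hmax
    have hMp : M ∈ pairModVar K P d := hC.1 hMC
    have h0 : rksum M₀ = dimsum d := rksum_of_isSumOfBands hM₀
    have hge : ∀ a, (M₀.mat a).rank ≤ (M.mat a).rank := by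
      intro a
      rw [hmax a]
      have hbdd : BddAbove {r : ℕ | ∃ X ∈ C, (X.mat a).rank = r} := by
        refine ⟨d (Q.s a), ?_⟩
        rintro r ⟨X, hX, rfl⟩
        have := Matrix.rank_le_card_width (X.mat a)
        simpa using this
      exact le_csSup hbdd ⟨M₀, hM₀C, rfl⟩
    have hge' : dimsum d ≤ rksum M := by
      rw [← h0]
      exact Finset.sum_le_sum fun a _ => hge a
    have hle := rksum_le_dimsum hgentle hMp
    exact isSumOfBands_of_rksum_eq hgentle hMp (le_antisymm hle hge')

end ModuliPaper
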